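/- arXiv:math/0410426 — 3 statements merged into one kernel-verified Lean document; each statement's English description precedes it below -/
import Mathlib

section
/- Let (Y,T) be a minimal continuous flow, and regard Λ(Y,T) as an additive subgroup of ℝ. The map from ℚ ⊗_ℤ Λ(Y,T) to ℝ determined by r ⊗ λ ↦ rλ is an injective ℚ-linear map whose range is equal to the set {0} ∪ {t ∈ ℝ \ {0} : the time-(1/t) map T^{1/t} is not minimal}. In particular, this set is a countable ℚ-linear subspace of ℝ. -/
open Set

/-- A continuous flow: a jointly continuous action of `ℝ` on `Y` with `T 0 = id` and
`T (s + t) = T s ∘ T t`. -/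
def IsFlow {Y : Type*} [TopologicalSpace Y] (T : ℝ → Y → Y) : Prop :=
  Continuous (fun p : Y × ℝ => T p.2 p.1) ∧ (∀ y, T 0 y = y) ∧
    ∀ s t : ℝ, ∀ y, T (s + t) y = T s (T t y)

/-- A set is invariant under the flow if `T t '' M = M` for all `t`. -/
def FlowInvariant {Y : Type*} (T : ℝ → Y → Y) (M : Set Y) : Prop :=
  ∀ t : ℝ, T t '' M = M

/-- The flow is minimal if the only closed invariant subsets are `∅` and `univ`. -/
def IsMinimalFlow {Y : Type*} [TopologicalSpace Y] (T : ℝ → Y → Y) : Prop :=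
  ∀ M : Set Y, IsClosed M → FlowInvariant T M → M = ∅ ∨ M = univ

/-- A self-map is minimal if the only closed subsets `M` with `g '' M = M` are `∅` and `univ`. -/
def IsMinimalMap {Y : Type*} [TopologicalSpace Y] (g : Y → Y) : Prop :=
  ∀ M : Set Y, IsClosed M → g '' M = M → M = ∅ ∨ M = univ

/-- `χ : Y → ℂ` is a (unit-circle valued) eigenvector of the flow `T` with eigenvalue `l ∈ ℝ`
if it is continuous, of modulus one, and `χ (T t y) = e^{2πi l t} * χ y`. -/
def IsEigenvector {Y : Type*} [TopologicalSpace Y] (T : ℝ → Y → Y) (l : ℝ) (χ : Y → ℂ) : Prop :=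
  Continuous χ ∧ (∀ y, ‖χ y‖ = 1) ∧
    ∀ (y : Y) (t : ℝ), χ (T t y) = Complex.exp (2 * Real.pi * Complex.I * l * t) * χ y

/-- The set `Λ(Y, T)` of eigenvalues of a flow. -/
def Eigenvalues {Y : Type*} [TopologicalSpace Y] (T : ℝ → Y → Y) : Set ℝ :=
  {l : ℝ | ∃ χ : Y → ℂ, IsEigenvector T l χ}

/-! ### Auxiliary lemmas -/

section FlowBasics

variable {Y : Type*} [TopologicalSpace Y] {T : ℝ → Y → Y}

theorem IsFlow.contT (hT : IsFlow T) (t : ℝ) : Continuous (T t) :=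
  hT.1.comp (continuous_id.prodMk continuous_const)

theorem IsFlow.cancel (hT : IsFlow T) (t : ℝ) (y : Y) : T (-t) (T t y) = y := by
  rw [← hT.2.2, neg_add_cancel, hT.2.1]

theorem IsFlow.cancel' (hT : IsFlow T) (t : ℝ) (y : Y) : T t (T (-t) y) = y := by
  rw [← hT.2.2, add_neg_cancel, hT.2.1]

theorem IsFlow.image_comp' (hT : IsFlow T) (a b : ℝ) (M : Set Y) :
    T a '' (T b '' M) = T (a + b) '' M := by
  rw [← Set.image_comp]
  exact Set.image_congr fun y _ => (hT.2.2 a b y).symm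

theorem IsFlow.image_zero (hT : IsFlow T) (M : Set Y) : T 0 '' M = M := by
  have : T (0 : ℝ) = id := funext hT.2.1
  rw [this, Set.image_id]

theorem IsFlow.image_cancel (hT : IsFlow T) (t : ℝ) (M : Set Y) :
    T t '' (T (-t) '' M) = M := by
  rw [hT.image_comp', add_neg_cancel, hT.image_zero]

theorem IsFlow.image_cancel' (hT : IsFlow T) (t : ℝ) (M : Set Y) :
    T (-t) '' (T t '' M) = M := by
  rw [hT.image_comp', neg_add_cancel, hT.image_zero]

theorem IsFlow.inj (hT : IsFlow T) (t : ℝ) : Function.Injective (T t) := by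
  intro a b h
  have := congrArg (T (-t)) h
  rwa [hT.cancel, hT.cancel] at this

end FlowBasics

section Backward

variable {Y : Type*} [TopologicalSpace Y] [Nonempty Y] {T : ℝ → Y → Y}

theorem not_minimalMap_of_eigenvector (hT : IsFlow T) {l : ℝ} {χ : Y → ℂ}
    (hχ : IsEigenvector T l χ) (hl : l ≠ 0) {s : ℝ} {k : ℤ} (hk : l * s = (k : ℝ)) :
    ¬ IsMinimalMap (T s) := by
  obtain ⟨hc, hab, he⟩ := hχ
  intro hm
  obtain ⟨y₀⟩ := ‹Nonempty Y›
  have hone : Complex.exp (2 * Real.pi * Complex.I * l * s) = 1 := by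
    have hks : ((l : ℂ) * (s : ℂ)) = (k : ℂ) := by exact_mod_cast congrArg (fun x : ℝ => (x : ℂ)) hk
    have h2 : (2 * (Real.pi : ℂ) * Complex.I * (l : ℂ) * (s : ℂ)) =
        (k : ℂ) * (2 * (Real.pi : ℂ) * Complex.I) := by
      linear_combination (2 * (Real.pi : ℂ) * Complex.I) * hks
    rw [h2, Complex.exp_int_mul_two_pi_mul_I]
  set M : Set Y := {y | χ y = χ y₀} with hM
  have hMcl : IsClosed M := isClosed_eq hc continuous_const
  have hMinv : T s '' M = M := by
    apply Set.Subset.antisymm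
    · rintro _ ⟨m, hm', rfl⟩
      show χ (T s m) = χ y₀
      rw [he, hone, one_mul]
      exact hm'
    · intro m hm'
      refine ⟨T (-s) m, ?_, hT.cancel' s m⟩
      show χ (T (-s) m) = χ y₀
      have h3 := he (T (-s) m) s
      rw [hT.cancel' s m, hone, one_mul] at h3
      rw [← h3]
      exact hm'
  rcases hm M hMcl hMinv with h0 | hu
  · have : y₀ ∈ M := rfl
    rw [h0] at this
    exact this
  · have hy1 : χ (T (1 / (2 * l)) y₀) = - χ y₀ := by
      rw [he]
      have hl' : (l : ℂ) ≠ 0 := Complex.ofReal_ne_zero.2 hl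
      have harg : (2 * (Real.pi : ℂ) * Complex.I * (l : ℂ) * ((1 / (2 * l) : ℝ) : ℂ)) =
          (Real.pi : ℂ) * Complex.I := by
        push_cast
        field_simp
      rw [harg, Complex.exp_pi_mul_I, neg_one_mul]
    have h1 : T (1 / (2 * l)) y₀ ∈ M := by rw [hu]; exact mem_univ _
    have h2 : χ y₀ = - χ y₀ := by rw [← hy1]; exact h1.symm
    have h3 : χ y₀ = 0 := by
      linear_combination (1 / 2 : ℂ) * h2
    have h4 := hab y₀
    rw [h3] at h4
    simp at h4

end Backward

section Countable

variable {Y : Type*} [MetricSpace Y] [CompactSpace Y] [Nonempty Y] {T : ℝ → Y → Y}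

theorem eigenvalues_countable (T : ℝ → Y → Y) : (Eigenvalues T).Countable := by
  classical
  obtain ⟨y₀⟩ := ‹Nonempty Y›
  have hsel : ∀ l : Eigenvalues T, ∃ χ : C(Y, ℂ), (∀ y, ‖χ y‖ = 1) ∧
      ∀ (y : Y) (t : ℝ), χ (T t y) =
        Complex.exp (2 * Real.pi * Complex.I * (l : ℝ) * t) * χ y := by
    rintro ⟨l, χ, h1, h2, h3⟩
    exact ⟨⟨χ, h1⟩, h2, h3⟩
  choose f hf1 hf2 using hsel
  have hsep : ∀ l m : Eigenvalues T, l ≠ m → 2 ≤ dist (f l) (f m) := by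
    intro l m hlm
    set ν : ℝ := (l : ℝ) - (m : ℝ) with hν
    have hν0 : ν ≠ 0 := sub_ne_zero.2 fun h => hlm (Subtype.ext h)
    set θ : ℝ := Complex.arg ((f l y₀) * (starRingEnd ℂ) (f m y₀)) with hθ
    set t : ℝ := (Real.pi - θ) / (2 * Real.pi * ν) with ht
    set y : Y := T t y₀ with hy
    have hψabs : ‖(f l y₀) * (starRingEnd ℂ) (f m y₀)‖ = 1 := by
      rw [norm_mul, Complex.norm_conj, hf1, hf1, one_mul]
    have hψ0 : (f l y₀) * (starRingEnd ℂ) (f m y₀) = Complex.exp ((θ : ℂ) * Complex.I) := by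
      conv_lhs => rw [← Complex.norm_mul_exp_arg_mul_I ((f l y₀) * (starRingEnd ℂ) (f m y₀))]
      rw [hψabs]
      norm_num
      rfl
    have hψ : (f l y) * (starRingEnd ℂ) (f m y) = -1 := by
      have e1 := hf2 l y₀ t
      have e2 := hf2 m y₀ t
      rw [hy, e1, e2, map_mul, ← Complex.exp_conj]
      have hrw : (2 * (Real.pi : ℂ) * Complex.I * ((m : ℝ) : ℂ) * (t : ℂ)) =
          (((2 * Real.pi * (m : ℝ) * t : ℝ)) : ℂ) * Complex.I := by
        push_cast
        ring
      have hconjB : (starRingEnd ℂ) (2 * (Real.pi : ℂ) * Complex.I * ((m : ℝ) : ℂ) * (t : ℂ)) =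
          -(2 * (Real.pi : ℂ) * Complex.I * ((m : ℝ) : ℂ) * (t : ℂ)) := by
        rw [hrw, map_mul, Complex.conj_ofReal, Complex.conj_I]
        ring
      rw [hconjB]
      have comb : Complex.exp (2 * (Real.pi:ℂ) * Complex.I * ((l:ℝ):ℂ) * (t:ℂ)) * (f l y₀) *
          (Complex.exp (-(2 * (Real.pi:ℂ) * Complex.I * ((m:ℝ):ℂ) * (t:ℂ))) *
            (starRingEnd ℂ) (f m y₀)) =
          Complex.exp (((2 * Real.pi * ν * t : ℝ) : ℂ) * Complex.I) *
            ((f l y₀) * (starRingEnd ℂ) (f m y₀)) := by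
        rw [show Complex.exp (2 * (Real.pi:ℂ) * Complex.I * ((l:ℝ):ℂ) * (t:ℂ)) * (f l y₀) *
            (Complex.exp (-(2 * (Real.pi:ℂ) * Complex.I * ((m:ℝ):ℂ) * (t:ℂ))) *
              (starRingEnd ℂ) (f m y₀)) =
            Complex.exp (2 * (Real.pi:ℂ) * Complex.I * ((l:ℝ):ℂ) * (t:ℂ)) *
              Complex.exp (-(2 * (Real.pi:ℂ) * Complex.I * ((m:ℝ):ℂ) * (t:ℂ))) *
              ((f l y₀) * (starRingEnd ℂ) (f m y₀)) from by ring]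
        rw [← Complex.exp_add]
        congr 2
        push_cast [hν]
        ring
      rw [comb, hψ0, ← Complex.exp_add]
      have harg : 2 * Real.pi * ν * t = Real.pi - θ := by
        rw [ht]
        field_simp
      rw [harg]
      have : (((Real.pi - θ : ℝ)) : ℂ) * Complex.I + (θ : ℂ) * Complex.I =
          (Real.pi : ℂ) * Complex.I := by
        push_cast
        ring
      rw [this, Complex.exp_pi_mul_I]
    have hm2 : (f m y) * (starRingEnd ℂ) (f m y) = 1 := by
      rw [Complex.mul_conj, Complex.normSq_eq_norm_sq, hf1]
      norm_num
    have hdiff : ‖f l y - f m y‖ = 2 := by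
      have hfac : f l y - f m y = ((f l y) * (starRingEnd ℂ) (f m y) - 1) * f m y := by
        linear_combination (-(f l y)) * hm2
      rw [hfac, norm_mul, hψ, hf1, mul_one]
      norm_num
    calc (2 : ℝ) = dist (f l y) (f m y) := by rw [Complex.dist_eq, hdiff]
      _ ≤ dist (f l) (f m) := ContinuousMap.dist_apply_le_dist y
  obtain ⟨D, hDc, hDd⟩ := TopologicalSpace.exists_countable_dense C(Y, ℂ)
  have hpick : ∀ l : Eigenvalues T, ∃ p ∈ D, dist (f l) p < 1 := by
    intro l
    rcases Metric.dense_iff.1 hDd (f l) 1 one_pos with ⟨p, hp1, hp2⟩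
    rw [Metric.mem_ball] at hp1
    rw [dist_comm] at hp1
    exact ⟨p, hp2, hp1⟩
  choose d hd1 hd2 using hpick
  have hinj : Function.Injective d := by
    intro a b hab
    by_contra hne
    have h1 := hsep a b hne
    have h2 : dist (f a) (f b) ≤ dist (f a) (d a) + dist (d b) (f b) := by
      rw [hab]
      exact dist_triangle _ _ _
    have h3 := hd2 a
    have h4 := hd2 b
    rw [dist_comm] at h4
    linarith
  have : Countable (Eigenvalues T) := by
    haveI := hDc.to_subtype
    exact Function.Injective.countable
      (f := fun l : Eigenvalues T => (⟨d l, hd1 l⟩ : D))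
      fun a b h => hinj (congrArg Subtype.val h)
  exact Set.countable_coe_iff.1 this

end Countable

section Zorn

variable {Y : Type*} [MetricSpace Y] [CompactSpace Y]

theorem exists_minimal_subsystem {g : Y → Y} (hg : Continuous g)
    {M₀ : Set Y} (h0cl : IsClosed M₀) (h0ne : M₀.Nonempty) (h0inv : g '' M₀ = M₀) :
    ∃ M, M ⊆ M₀ ∧ M.Nonempty ∧ IsClosed M ∧ g '' M = M ∧
      ∀ N, N ⊆ M → IsClosed N → N.Nonempty → g '' N = N → N = M := by
  set S : Set (Set Y) := {N | N.Nonempty ∧ IsClosed N ∧ g '' N = N} with hS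
  have H : ∀ c ⊆ S, IsChain (· ⊆ ·) c → c.Nonempty → ∃ lb ∈ S, ∀ s ∈ c, lb ⊆ s := by
    intro c hcS hchain hcne
    haveI : Nonempty c := hcne.to_subtype
    have hdir : DirectedOn (· ⊇ ·) c := IsChain.directedOn hchain.symm
    have hne : ∀ U ∈ c, U.Nonempty := fun U hU => (hcS hU).1
    have hcl : ∀ U ∈ c, IsClosed U := fun U hU => (hcS hU).2.1
    have hcomp : ∀ U ∈ c, IsCompact U := fun U hU => (hcl U hU).isCompact
    have hsne : (⋂₀ c).Nonempty :=
      IsCompact.nonempty_sInter_of_directed_nonempty_isCompact_isClosed hdir hne hcomp hcl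
    refine ⟨⋂₀ c, ⟨hsne, isClosed_sInter hcl, ?_⟩, fun u hu => sInter_subset_of_mem hu⟩
    apply Set.Subset.antisymm
    · rintro _ ⟨x, hx, rfl⟩ U hU
      have : g x ∈ g '' U := ⟨x, hx U hU, rfl⟩
      rwa [(hcS hU).2.2] at this
    · intro x hx
      have key : (⋂₀ ((fun U => U ∩ g ⁻¹' {x}) '' c)).Nonempty := by
        haveI : Nonempty ((fun U => U ∩ g ⁻¹' {x}) '' c) := (hcne.image _).to_subtype
        apply IsCompact.nonempty_sInter_of_directed_nonempty_isCompact_isClosed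
        · rintro _ ⟨U, hU, rfl⟩ _ ⟨V, hV, rfl⟩
          rcases hdir U hU V hV with ⟨W, hW, hWU, hWV⟩
          exact ⟨W ∩ g ⁻¹' {x}, ⟨W, hW, rfl⟩,
            inter_subset_inter_left _ hWU, inter_subset_inter_left _ hWV⟩
        · rintro _ ⟨U, hU, rfl⟩
          have hxU : x ∈ U := hx U hU
          rw [← (hcS hU).2.2] at hxU
          rcases hxU with ⟨z, hz, hzx⟩
          exact ⟨z, hz, by simp [hzx]⟩
        · rintro _ ⟨U, hU, rfl⟩
          exact ((hcl U hU).inter (isClosed_singleton.preimage hg)).isCompact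
        · rintro _ ⟨U, hU, rfl⟩
          exact (hcl U hU).inter (isClosed_singleton.preimage hg)
      rcases key with ⟨z, hz⟩
      have hz' : ∀ U ∈ c, z ∈ U ∩ g ⁻¹' {x} := fun U hU => hz _ ⟨U, hU, rfl⟩
      obtain ⟨U₀, hU₀⟩ := hcne
      refine ⟨z, fun U hU => (hz' U hU).1, ?_⟩
      have := (hz' U₀ hU₀).2
      simpa using this
  obtain ⟨m, hmx, hmin'⟩ := zorn_superset_nonempty S H M₀ ⟨h0ne, h0cl, h0inv⟩
  exact ⟨m, hmx, hmin'.prop.1, hmin'.prop.2.1, hmin'.prop.2.2,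
    fun N hNm hNcl hNne hNinv =>
      Set.Subset.antisymm hNm (hmin'.2 ⟨hNne, hNcl, hNinv⟩ hNm)⟩

end Zorn

section Forward

variable {Y : Type*} [MetricSpace Y] [CompactSpace Y] [Nonempty Y] {T : ℝ → Y → Y}

theorem exists_eigen_of_not_minimal (hT : IsFlow T) (hmin : IsMinimalFlow T) {s : ℝ}
    (hs : s ≠ 0) (h : ¬ IsMinimalMap (T s)) :
    ∃ l ∈ Eigenvalues T, l ≠ 0 ∧ ∃ k : ℤ, l * s = (k : ℝ) := by
  classical
  rw [IsMinimalMap] at h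
  push_neg at h
  obtain ⟨M₀, h0cl, h0inv, h0ne, h0nu⟩ := h
  obtain ⟨M, hM0, hMne, hMcl, hMinv, hMmin⟩ :=
    exists_minimal_subsystem (hT.contT s) h0cl h0ne h0inv
  have hcompM : IsCompact M := hMcl.isCompact
  have hcomm : ∀ (u : ℝ) (N : Set Y), T s '' (T u '' N) = T u '' (T s '' N) := by
    intro u N
    rw [hT.image_comp', hT.image_comp', add_comm]
  -- key: if `T u '' M` meets `M` then they are equal
  have hkey : ∀ u : ℝ, (T u '' M ∩ M).Nonempty → T u '' M = M := by
    intro u hne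
    have hNcl : IsClosed (T u '' M ∩ M) := (hcompM.image (hT.contT u)).isClosed.inter hMcl
    have hNinv : T s '' (T u '' M ∩ M) = T u '' M ∩ M := by
      rw [Set.image_inter (hT.inj s), hcomm, hMinv]
    have h1 : T u '' M ∩ M = M := hMmin _ inter_subset_right hNcl hne hNinv
    have hsub1 : M ⊆ T u '' M := by
      intro x hx
      rw [← h1] at hx
      exact hx.1
    have h2 : T (-u) '' (T u '' M ∩ M) = M := by
      apply hMmin
      · rw [Set.image_inter (hT.inj (-u)), hT.image_cancel']
        exact inter_subset_left
      · exact ((hcompM.image (hT.contT u)).inter_right hMcl).image (hT.contT (-u)) |>.isClosed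
      · exact hne.image _
      · rw [hcomm, hNinv]
    have h4 : T u '' M = T u '' M ∩ M := by
      conv_lhs => rw [← h2, hT.image_cancel]
    apply Set.Subset.antisymm _ hsub1
    rw [h4]
    exact inter_subset_right
  -- the subgroup of return times
  let A : AddSubgroup ℝ :=
    { carrier := {u : ℝ | T u '' M = M}
      zero_mem' := hT.image_zero M
      add_mem' := by
        intro a b ha hb
        show T (a + b) '' M = M
        rw [← hT.image_comp']
        rw [show T b '' M = M from hb, show T a '' M = M from ha]
      neg_mem' := by
        intro a ha
        show T (-a) '' M = M
        nth_rewrite 1 [← show T a '' M = M from ha]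
        exact hT.image_cancel' a M }
  have hmemA : ∀ u : ℝ, u ∈ A ↔ T u '' M = M := fun u => Iff.rfl
  have hsA : s ∈ A := hMinv
  -- A is closed
  have hAmem : ∀ u ∈ closure (A : Set ℝ), ∀ x ∈ M, T u x ∈ M := by
    intro u hu x hx
    have hcont : Continuous fun t : ℝ => T t x :=
      hT.1.comp (continuous_const.prodMk continuous_id)
    have hclo : IsClosed {t : ℝ | T t x ∈ M} := hMcl.preimage hcont
    have hsub : (A : Set ℝ) ⊆ {t : ℝ | T t x ∈ M} := by
      intro a ha
      have h1 : T a x ∈ T a '' M := ⟨x, hx, rfl⟩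
      show T a x ∈ M
      rwa [show T a '' M = M from ha] at h1
    exact hclo.closure_subset_iff.2 hsub hu
  have hAcl : IsClosed (A : Set ℝ) := by
    apply isClosed_of_closure_subset
    intro u hu
    have hneg : -u ∈ closure (A : Set ℝ) := by
      have h1 : u ∈ A.topologicalClosure := hu
      have h2 : -u ∈ A.topologicalClosure := A.topologicalClosure.neg_mem h1
      exact h2
    show T u '' M = M
    apply Set.Subset.antisymm
    · rintro _ ⟨x, hx, rfl⟩
      exact hAmem u hu x hx
    · intro x hx
      exact ⟨T (-u) x, hAmem (-u) hneg x hx, hT.cancel' u x⟩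
  -- A is not dense
  have hAnd : ¬ Dense (A : Set ℝ) := by
    intro hd
    have hAuniv : (A : Set ℝ) = univ := by
      apply Set.eq_univ_of_univ_subset
      rw [← hd.closure_eq]
      exact hAcl.closure_subset_iff.2 fun x hx => hx
    have hMflow : FlowInvariant T M := by
      intro t
      have : t ∈ (A : Set ℝ) := by rw [hAuniv]; exact mem_univ t
      exact this
    rcases hmin M hMcl hMflow with h1 | h1
    · exact (nonempty_iff_ne_empty.1 hMne) h1
    · apply h0nu
      apply Set.eq_univ_of_univ_subset
      rw [← h1]
      exact hM0
  rcases AddSubgroup.dense_or_cyclic A with hd | ⟨c, hc⟩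
  · exact absurd hd hAnd
  · have hcA : c ∈ A := by
      rw [hc]
      exact AddSubgroup.subset_closure (Set.mem_singleton c)
    have hsmem : s ∈ AddSubgroup.closure {c} := hc ▸ hsA
    obtain ⟨n, hn⟩ := AddSubgroup.mem_closure_singleton.1 hsmem
    have hc0 : c ≠ 0 := by
      rintro rfl
      rw [smul_zero] at hn
      exact hs hn.symm
    have hAmul : ∀ u ∈ A, ∃ k : ℤ, u = (k : ℝ) * c := by
      intro u hu
      obtain ⟨k, hk⟩ := AddSubgroup.mem_closure_singleton.1 (hc ▸ hu)
      exact ⟨k, by rw [← hk, zsmul_eq_mul]⟩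
    set d : ℝ := |c| with hdd
    have hd0 : (0 : ℝ) < d := abs_pos.2 hc0
    have hdA : d ∈ A := by
      rcases abs_choice c with h1 | h1
      · rw [hdd, h1]; exact hcA
      · rw [hdd, h1]; exact A.neg_mem hcA
    set V : Set Y := (fun p : Y × ℝ => T p.2 p.1) '' (M ×ˢ Icc 0 d) with hV
    have hVcompact : IsCompact V := (hcompM.prod isCompact_Icc).image hT.1
    have hVmem : ∀ y, y ∈ V ↔ ∃ t ∈ Icc (0 : ℝ) d, y ∈ T t '' M := by
      intro y
      constructor
      · rintro ⟨⟨m, t⟩, ⟨hm, ht⟩, rfl⟩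
        exact ⟨t, ht, m, hm, rfl⟩
      · rintro ⟨t, ht, m, hm, rfl⟩
        exact ⟨(m, t), ⟨hm, ht⟩, rfl⟩
    have hshift : ∀ u : ℝ, ∃ t ∈ Icc (0 : ℝ) d, T u '' M = T t '' M := by
      intro u
      set k : ℤ := ⌊u / d⌋ with hk
      have hfl := Int.floor_le (u / d)
      have hfl2 := Int.lt_floor_add_one (u / d)
      have hmul1 : (k : ℝ) * d ≤ u := by
        have h5 := mul_le_mul_of_nonneg_right hfl hd0.le
        rwa [div_mul_cancel₀ u hd0.ne'] at h5
      have hmul2 : u < ((k : ℝ) + 1) * d := by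
        have h5 := mul_lt_mul_of_pos_right hfl2 hd0
        rwa [div_mul_cancel₀ u hd0.ne'] at h5
      refine ⟨u - k * d, ⟨?_, ?_⟩, ?_⟩
      · linarith
      · nlinarith
      · have hkd : T ((k : ℝ) * d) '' M = M := by
          have h1 : ((k : ℝ) * d) ∈ A := by
            have := A.zsmul_mem hdA k
            rwa [zsmul_eq_mul] at this
          exact h1
        have h2 : T (u - k * d) '' (T ((k : ℝ) * d) '' M) = T u '' M := by
          rw [hT.image_comp']
          ring_nf
        rw [← h2, hkd]
    have hVinv : FlowInvariant T V := by
      intro u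
      have hfwd : ∀ w : ℝ, ∀ y ∈ V, T w y ∈ V := by
        intro w y hy
        obtain ⟨t, ht, m, hm, rfl⟩ := (hVmem y).1 hy
        obtain ⟨t', ht', heq⟩ := hshift (w + t)
        refine (hVmem _).2 ⟨t', ht', ?_⟩
        rw [← heq]
        exact ⟨m, hm, hT.2.2 w t m⟩
      apply Set.Subset.antisymm
      · rintro _ ⟨y, hy, rfl⟩
        exact hfwd u y hy
      · intro y hy
        exact ⟨T (-u) y, hfwd (-u) y hy, hT.cancel' u y⟩
    have hVuniv : V = univ := by
      rcases hmin V hVcompact.isClosed hVinv with h1 | h1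
      · exfalso
        obtain ⟨m, hm⟩ := hMne
        have : m ∈ V := (hVmem m).2 ⟨0, ⟨le_refl 0, hd0.le⟩, m, hm, hT.2.1 m⟩
        rw [h1] at this
        exact this
      · exact h1
    have hτex : ∀ y : Y, ∃ t, t ∈ Icc (0 : ℝ) d ∧ y ∈ T t '' M := by
      intro y
      have : y ∈ V := by rw [hVuniv]; exact mem_univ y
      obtain ⟨t, ht, hy⟩ := (hVmem y).1 this
      exact ⟨t, ht, hy⟩
    choose τ hτ1 hτ2 using hτex
    have hwd : ∀ (t t' : ℝ) (y : Y), y ∈ T t '' M → y ∈ T t' '' M → (t - t') ∈ A := by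
      rintro t t' y ⟨m, hm, hym⟩ ⟨m', hm', hym'⟩
      have h2 : T (t - t') m = m' := by
        have e1 : T (t - t') m = T (-t') (T t m) := by
          rw [← hT.2.2]
          ring_nf
        rw [e1, hym, ← hym', hT.cancel]
      have hne : (T (t - t') '' M ∩ M).Nonempty :=
        ⟨m', ⟨h2 ▸ ⟨m, hm, rfl⟩, hm'⟩⟩
      exact hkey (t - t') hne
    set l : ℝ := 1 / c with hl
    have hlc : l * c = 1 := by
      rw [hl]; field_simp
    set χ : Y → ℂ := fun y => Complex.exp (2 * Real.pi * Complex.I * l * (τ y)) with hχdef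
    have hχfiber : ∀ (y : Y) (t : ℝ), y ∈ T t '' M →
        χ y = Complex.exp (2 * Real.pi * Complex.I * l * t) := by
      intro y t hyt
      obtain ⟨k, hk⟩ := hAmul _ (hwd (τ y) t y (hτ2 y) hyt)
      have hτt : (τ y : ℝ) = t + k * c := by linarith [hk]
      have harg : (2 * (Real.pi : ℂ) * Complex.I * (l : ℂ) * ((τ y : ℝ) : ℂ)) =
          2 * (Real.pi : ℂ) * Complex.I * (l : ℂ) * (t : ℂ) +
            (k : ℂ) * (2 * (Real.pi : ℂ) * Complex.I) := by
        have hlc' : ((l : ℂ)) * ((c : ℝ) : ℂ) = 1 := by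
          exact_mod_cast congrArg (fun x : ℝ => (x : ℂ)) hlc
        rw [show ((τ y : ℝ) : ℂ) = ((t : ℝ) : ℂ) + ((k : ℝ) : ℂ) * ((c : ℝ) : ℂ) by
          exact_mod_cast congrArg (fun x : ℝ => (x : ℂ)) hτt]
        push_cast
        linear_combination (2 * (Real.pi : ℂ) * Complex.I * (k : ℂ)) * hlc'
      show Complex.exp (2 * Real.pi * Complex.I * l * (τ y)) = _
      rw [harg, Complex.exp_add, Complex.exp_int_mul_two_pi_mul_I, mul_one]
    have heig : ∀ (y : Y) (t : ℝ), χ (T t y) =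
        Complex.exp (2 * Real.pi * Complex.I * l * t) * χ y := by
      intro y t
      have h1 : T t y ∈ T (t + τ y) '' M := by
        obtain ⟨m, hm, hym⟩ := hτ2 y
        exact ⟨m, hm, by rw [hT.2.2, hym]⟩
      rw [hχfiber (T t y) _ h1, hχfiber y (τ y) (hτ2 y), ← Complex.exp_add]
      congr 1
      push_cast
      ring
    have habs : ∀ y, ‖χ y‖ = 1 := by
      intro y
      show ‖Complex.exp (2 * Real.pi * Complex.I * l * (τ y))‖ = 1
      have : (2 * (Real.pi : ℂ) * Complex.I * (l : ℂ) * ((τ y : ℝ) : ℂ)) =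
          ((2 * Real.pi * l * τ y : ℝ) : ℂ) * Complex.I := by
        push_cast
        ring
      rw [this, Complex.norm_exp_ofReal_mul_I]
    -- continuity via compact graph
    set K : Set (Y × ℂ) :=
      (fun p : Y × ℝ => (T p.2 p.1, Complex.exp (2 * Real.pi * Complex.I * l * p.2))) ''
        (M ×ˢ Icc 0 d) with hK
    have hKgraph : ∀ y : Y, (y, χ y) ∈ K := by
      intro y
      refine ⟨((hτ2 y).choose, τ y), ⟨(hτ2 y).choose_spec.1, hτ1 y⟩, ?_⟩
      have := (hτ2 y).choose_spec.2
      simp only [Prod.mk.injEq]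
      exact ⟨this, rfl⟩
    have hKsub : ∀ p ∈ K, p.2 = χ p.1 := by
      rintro _ ⟨⟨m, t⟩, ⟨hm, ht⟩, rfl⟩
      show Complex.exp (2 * Real.pi * Complex.I * l * t) = χ (T t m)
      rw [hχfiber (T t m) t ⟨m, hm, rfl⟩]
    have hKcomp : IsCompact K := by
      apply (hcompM.prod isCompact_Icc).image
      apply Continuous.prodMk hT.1
      exact Complex.continuous_exp.comp
        (continuous_const.mul (Complex.continuous_ofReal.comp continuous_snd))
    haveI : CompactSpace K := isCompact_iff_compactSpace.1 hKcomp
    have hbij : Function.Bijective (fun k : K => (k : Y × ℂ).1) := by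
      constructor
      · rintro ⟨⟨y1, z1⟩, h1⟩ ⟨⟨y2, z2⟩, h2⟩ hh
        have hy : y1 = y2 := hh
        have e1 : z1 = χ y1 := hKsub _ h1
        have e2 : z2 = χ y2 := hKsub _ h2
        apply Subtype.ext
        simp only [Prod.mk.injEq]
        exact ⟨hy, by rw [e1, e2, hy]⟩
      · intro y
        exact ⟨⟨(y, χ y), hKgraph y⟩, rfl⟩
    let e : K ≃ Y := Equiv.ofBijective _ hbij
    have he_cont : Continuous (e : K → Y) := continuous_fst.comp continuous_subtype_val
    let E : K ≃ₜ Y := Continuous.homeoOfEquivCompactToT2 (f := e) he_cont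
    have hχcont : Continuous χ := by
      have hfun : χ = (fun k : K => (k : Y × ℂ).2) ∘ E.symm := by
        funext y
        have h1 : E (⟨(y, χ y), hKgraph y⟩ : K) = y := rfl
        have h2 : E.symm y = (⟨(y, χ y), hKgraph y⟩ : K) := by
          apply E.injective
          rw [Homeomorph.apply_symm_apply]
          exact h1.symm
        simp only [Function.comp_apply, h2]
      rw [hfun]
      exact (continuous_snd.comp continuous_subtype_val).comp E.symm.continuous
    refine ⟨l, ⟨χ, hχcont, habs, heig⟩, one_div_ne_zero hc0, n, ?_⟩
    rw [← hn, zsmul_eq_mul, hl]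
    field_simp

end Forward

open scoped TensorProduct in
/-- For a minimal continuous flow `(Y, T)` with eigenvalue group
`Λ(Y, T) = G ≤ ℝ`, the map `ℚ ⊗_ℤ Λ(Y,T) → ℝ` determined by `r ⊗ λ ↦ r * λ` is an injective
`ℚ`-linear map whose range is `{0} ∪ {t ≠ 0 : the time-(1/t) map is not minimal}`; in particular
this set is a countable `ℚ`-linear subspace of `ℝ`. -/
theorem tensor_eigenvalues_inj_range_eq {Y : Type*} [MetricSpace Y] [CompactSpace Y]
    [Nonempty Y] (T : ℝ → Y → Y) (hT : IsFlow T) (hmin : IsMinimalFlow T)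
    (G : AddSubgroup ℝ) (hG : (G : Set ℝ) = Eigenvalues T) :
    ∃ φ : ℚ ⊗[ℤ] G →ₗ[ℚ] ℝ,
      (∀ (r : ℚ) (l : G), φ (r ⊗ₜ[ℤ] l) = (r : ℝ) * (l : ℝ)) ∧
      Function.Injective φ ∧
      Set.range φ = {0} ∪ {t : ℝ | t ≠ 0 ∧ ¬ IsMinimalMap (T (1 / t))} ∧
      ({(0 : ℝ)} ∪ {t : ℝ | t ≠ 0 ∧ ¬ IsMinimalMap (T (1 / t))}).Countable := by
  classical
  set φ : ℚ ⊗[ℤ] G →ₗ[ℚ] ℝ := (G.subtype.toIntLinearMap).liftBaseChange ℚ with hφ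
  have hφt : ∀ (r : ℚ) (l : G), φ (r ⊗ₜ[ℤ] l) = (r : ℝ) * (l : ℝ) := by
    intro r l
    rw [hφ, LinearMap.liftBaseChange_tmul]
    simp [Rat.smul_def]
  have hpure : ∀ x : ℚ ⊗[ℤ] G, ∃ (q : ℚ) (g : G), x = q ⊗ₜ[ℤ] g := by
    intro x
    induction x using TensorProduct.induction_on with
    | zero => exact ⟨0, 0, by simp⟩
    | tmul q g => exact ⟨q, g, rfl⟩
    | add x y hx hy =>
      obtain ⟨q, a, rfl⟩ := hx
      obtain ⟨r, b, rfl⟩ := hy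
      refine ⟨(1 : ℚ) / (q.den * r.den), (q.num * r.den) • a + (r.num * q.den) • b, ?_⟩
      rw [TensorProduct.tmul_add, TensorProduct.tmul_smul, TensorProduct.tmul_smul,
        TensorProduct.smul_tmul', TensorProduct.smul_tmul']
      have hq : ((q.den : ℚ)) ≠ 0 := by exact_mod_cast q.den_pos.ne'
      have hr : ((r.den : ℚ)) ≠ 0 := by exact_mod_cast r.den_pos.ne'
      congr 2
      · conv_lhs => rw [← Rat.num_div_den q]
        rw [zsmul_eq_mul]
        push_cast
        rw [mul_one_div, div_eq_div_iff hq (mul_ne_zero hq hr)]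
        ring
      · conv_lhs => rw [← Rat.num_div_den r]
        rw [zsmul_eq_mul]
        push_cast
        rw [mul_one_div, div_eq_div_iff hr (mul_ne_zero hq hr)]
        ring
  have hker : ∀ z : ℚ ⊗[ℤ] G, φ z = 0 → z = 0 := by
    intro z hz
    obtain ⟨q, g, rfl⟩ := hpure z
    rw [hφt] at hz
    rcases mul_eq_zero.1 hz with h1 | h1
    · have : q = 0 := by exact_mod_cast h1
      rw [this, TensorProduct.zero_tmul]
    · have : g = 0 := by
        apply Subtype.ext
        exact h1
      rw [this, TensorProduct.tmul_zero]
  have hinj : Function.Injective φ := by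
    intro a b h
    have h1 : φ (a - b) = 0 := by rw [map_sub, h, sub_self]
    have h2 := hker _ h1
    exact sub_eq_zero.1 h2
  have hrange : Set.range φ = {0} ∪ {t : ℝ | t ≠ 0 ∧ ¬ IsMinimalMap (T (1 / t))} := by
    ext t
    constructor
    · rintro ⟨x, rfl⟩
      obtain ⟨q, g, rfl⟩ := hpure x
      rw [hφt]
      by_cases h0 : (q : ℝ) * (g : ℝ) = 0
      · left
        exact h0
      · right
        refine ⟨h0, ?_⟩
        have hq0 : q ≠ 0 := by
          rintro rfl
          simp at h0
        have hg0 : (g : ℝ) ≠ 0 := fun h => h0 (by rw [h, mul_zero])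
        have hμG : (q.num : ℝ) * (g : ℝ) ∈ G := by
          have := G.zsmul_mem g.2 q.num
          rwa [zsmul_eq_mul] at this
        have hμE : ((q.num : ℝ) * (g : ℝ)) ∈ Eigenvalues T := by
          rw [← hG]
          exact hμG
        obtain ⟨χ, hχ⟩ := hμE
        have hnum : ((q.num : ℝ)) ≠ 0 := by exact_mod_cast Rat.num_ne_zero.2 hq0
        have hμ0 : (q.num : ℝ) * (g : ℝ) ≠ 0 := mul_ne_zero hnum hg0
        apply not_minimalMap_of_eigenvector hT hχ hμ0 (k := (q.den : ℤ))
        have hqr : ((q : ℝ)) ≠ 0 := by exact_mod_cast hq0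
        have hden : ((q.den : ℝ)) ≠ 0 := by exact_mod_cast q.den_pos.ne'
        have hcast : (q : ℝ) = (q.num : ℝ) / (q.den : ℝ) := by rw [Rat.cast_def]
        push_cast
        rw [hcast]
        field_simp
    · rintro (h0 | ⟨hne, hnm⟩)
      · refine ⟨0, ?_⟩
        rw [map_zero]
        exact (mem_singleton_iff.1 h0).symm
      · have hs : (1 : ℝ) / t ≠ 0 := one_div_ne_zero hne
        obtain ⟨l, hlE, hl0, k, hk⟩ := exists_eigen_of_not_minimal hT hmin hs hnm
        have hlG : l ∈ G := by
          rw [← SetLike.mem_coe, hG]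
          exact hlE
        have hk0 : (k : ℝ) ≠ 0 := by
          rw [← hk]
          exact mul_ne_zero hl0 hs
        refine ⟨((k : ℚ)⁻¹) ⊗ₜ[ℤ] ⟨l, hlG⟩, ?_⟩
        rw [hφt]
        have hkq : (((k : ℚ)⁻¹ : ℚ) : ℝ) = ((k : ℝ))⁻¹ := by push_cast; ring
        rw [hkq]
        rw [mul_one_div] at hk
        have hl : l = (k : ℝ) * t := (div_eq_iff hne).1 hk
        show ((k : ℝ))⁻¹ * l = t
        rw [hl, inv_mul_cancel_left₀ hk0]
  refine ⟨φ, hφt, hinj, hrange, ?_⟩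
  rw [show ({(0 : ℝ)} ∪ {t : ℝ | t ≠ 0 ∧ ¬ IsMinimalMap (T (1 / t))}) = Set.range φ
    from hrange.symm]
  have hGc : (G : Set ℝ).Countable := by
    rw [hG]
    exact eigenvalues_countable T
  haveI : Countable G := hGc.to_subtype
  have hsub : Set.range φ ⊆ (fun p : ℚ × G => (p.1 : ℝ) * (p.2 : ℝ)) '' Set.univ := by
    rintro _ ⟨x, rfl⟩
    obtain ⟨q, g, rfl⟩ := hpure x
    exact ⟨(q, g), mem_univ _, (hφt q g).symm⟩
  exact (Set.countable_univ.image _).mono hsub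
end

section
/- Let (Y,T) be a minimal continuous flow and let t be a nonzero real number such that the time-(1/t) map T^{1/t} is not minimal. Then there exist a nonzero rational number r and a nonzero eigenvalue λ ∈ Λ(Y,T) such that t = rλ. -/
set_option linter.unusedSectionVars false
set_option maxHeartbeats 1000000


open Set

lemma exists_minimal_set {Y : Type*} [TopologicalSpace Y] [CompactSpace Y] {g : Y → Y}
    (hg : Function.Bijective g) (M₀ : Set Y) (h1 : IsClosed M₀) (h2 : g '' M₀ = M₀)
    (h3 : M₀.Nonempty) :
    ∃ M, M ⊆ M₀ ∧ M.Nonempty ∧ IsClosed M ∧ g '' M = M ∧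
      ∀ K, K ⊆ M → K.Nonempty → IsClosed K → g '' K = K → K = M := by
  have H : ∀ c ⊆ {K : Set Y | K.Nonempty ∧ IsClosed K ∧ g '' K = K},
      IsChain (· ⊆ ·) c → c.Nonempty →
      ∃ lb ∈ {K : Set Y | K.Nonempty ∧ IsClosed K ∧ g '' K = K}, ∀ s ∈ c, lb ⊆ s := by
    intro c hc hchain hcne
    have hdir : DirectedOn (· ⊇ ·) c := fun x hx y hy =>
      (hchain.total hx hy).elim (fun h => ⟨x, hx, subset_rfl, h⟩)
        (fun h => ⟨y, hy, h, subset_rfl⟩)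
    refine ⟨⋂₀ c, ⟨?_, ?_, ?_⟩, fun s hs => sInter_subset_of_mem hs⟩
    · have : Nonempty c := hcne.to_subtype
      exact IsCompact.nonempty_sInter_of_directed_nonempty_isCompact_isClosed
        hdir (fun U hU => (hc hU).1) (fun U hU => (hc hU).2.1.isCompact)
        (fun U hU => (hc hU).2.1)
    · exact isClosed_sInter fun U hU => (hc hU).2.1
    · have : Nonempty c := hcne.to_subtype
      rw [sInter_eq_iInter, image_iInter hg]
      exact iInter_congr fun U => (hc U.2).2.2
  obtain ⟨m, hmx, hm⟩ := zorn_superset_nonempty _ H M₀ ⟨h3, h1, h2⟩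
  exact ⟨m, hmx, hm.1.1, hm.1.2.1, hm.1.2.2,
    fun K hK h1 h2 h3 => hK.antisymm (hm.2 ⟨h1, h2, h3⟩ hK)⟩

section
variable {Y : Type*} [MetricSpace Y] [CompactSpace Y]
variable {T : ℝ → Y → Y} (hT : IsFlow T)
include hT

lemma flow_cont (u : ℝ) : Continuous (T u) :=
  hT.1.comp (continuous_id.prodMk continuous_const)

lemma flow_cont2 : Continuous (fun p : ℝ × Y => T p.1 p.2) :=
  hT.1.comp (continuous_snd.prodMk continuous_fst)

lemma flow_inv (u : ℝ) (y : Y) : T (-u) (T u y) = y := by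
  rw [← hT.2.2]; simp [hT.2.1]

lemma flow_bij (u : ℝ) : Function.Bijective (T u) :=
  Function.bijective_iff_has_inverse.2 ⟨T (-u), fun y => flow_inv hT u y,
    fun y => by simpa using flow_inv hT (-u) y⟩

lemma flow_image_image (u v : ℝ) (M : Set Y) : T u '' (T v '' M) = T (u + v) '' M := by
  rw [← image_comp]
  exact image_congr' (fun y => (hT.2.2 u v y).symm)

lemma flow_image_zero (M : Set Y) : T 0 '' M = M := by
  rw [image_congr' hT.2.1, image_id']

end

/-- If `(Y, T)` is a minimal continuous flow and `t ≠ 0` is such that the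
time-`1/t` map is not minimal, then `t = r * λ` for some nonzero rational `r` and some nonzero
eigenvalue `λ ∈ Λ(Y, T)`. -/
theorem exists_rat_eigenvalue_of_not_minimal {Y : Type*} [MetricSpace Y] [CompactSpace Y]
    [Nonempty Y] (T : ℝ → Y → Y) (hT : IsFlow T) (hmin : IsMinimalFlow T)
    (t : ℝ) (ht : t ≠ 0) (h : ¬ IsMinimalMap (T (1 / t))) :
    ∃ (r : ℚ) (l : ℝ), r ≠ 0 ∧ l ∈ Eigenvalues T ∧ l ≠ 0 ∧ t = (r : ℝ) * l := by
  classical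
  set s : ℝ := 1 / t with hs_def
  have hs0 : s ≠ 0 := one_div_ne_zero ht
  rw [IsMinimalMap] at h
  push_neg at h
  obtain ⟨M₀, hM₀c, hM₀i, hM₀ne, hM₀nu⟩ := h
  have hM₀ne' : M₀.Nonempty := hM₀ne
  obtain ⟨M, hMsub, hMne, hMc, hMi, hMmin⟩ :=
    exists_minimal_set (flow_bij hT s) M₀ hM₀c hM₀i hM₀ne'
  have hMnu : M ≠ univ := fun hu => hM₀nu (univ_subset_iff.1 (hu ▸ hMsub))
  have hMcpt : IsCompact M := hMc.isCompact
  -- the subgroup of return times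
  let S : AddSubgroup ℝ :=
    { carrier := {u : ℝ | T u '' M = M}
      zero_mem' := flow_image_zero hT M
      add_mem' := by
        intro a b ha hb
        show T (a + b) '' M = M
        rw [← flow_image_image hT, show T b '' M = M from hb, show T a '' M = M from ha]
      neg_mem' := by
        intro a ha
        show T (-a) '' M = M
        conv_lhs => rw [← show T a '' M = M from ha]
        rw [flow_image_image hT, neg_add_cancel, flow_image_zero hT] }
  have hSmem : ∀ u : ℝ, u ∈ S ↔ T u '' M = M := fun u => Iff.rfl
  -- closedness of S
  have hAclosed : IsClosed {u : ℝ | T u '' M ⊆ M} := by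
    have : {u : ℝ | T u '' M ⊆ M} = ⋂ m ∈ M, {u : ℝ | T u m ∈ M} := by
      ext u
      simp only [mem_setOf_eq, mem_iInter, image_subset_iff, subset_def, mem_preimage, forall_mem_image]
    rw [this]
    exact isClosed_biInter fun m hm =>
      hMc.preimage (hT.1.comp (continuous_const.prodMk continuous_id))
  have hSclosed : IsClosed (S : Set ℝ) := by
    have hset : (S : Set ℝ) =
        {u : ℝ | T u '' M ⊆ M} ∩ (fun u : ℝ => -u) ⁻¹' {u : ℝ | T u '' M ⊆ M} := by
      ext u
      simp only [mem_inter_iff, mem_preimage, mem_setOf_eq, SetLike.mem_coe, hSmem]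
      constructor
      · intro hu
        refine ⟨hu.le, ?_⟩
        have : (-u) ∈ S := S.neg_mem ((hSmem u).2 hu)
        exact ((hSmem (-u)).1 this).le
      · rintro ⟨h1, h2⟩
        refine h1.antisymm ?_
        have : M = T u '' (T (-u) '' M) := by
          rw [flow_image_image hT, add_neg_cancel, flow_image_zero hT]
        calc M = T u '' (T (-u) '' M) := this
          _ ⊆ T u '' M := image_mono h2
    rw [hset]
    exact hAclosed.inter (hAclosed.preimage continuous_neg)
  have hsS : s ∈ S := (hSmem s).2 hMi
  -- dichotomy
  rcases S.dense_or_cyclic with hdense | ⟨a, ha⟩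
  · exfalso
    have huniv : (S : Set ℝ) = univ := by
      rw [← hSclosed.closure_eq, hdense.closure_eq]
    have hinv : FlowInvariant T M := fun u =>
      (hSmem u).1 (by rw [← SetLike.mem_coe, huniv]; exact mem_univ u)
    rcases hmin M hMc hinv with he | hu
    · exact hMne.ne_empty he
    · exact hMnu hu
  · -- cyclic case
    have haS : a ∈ S := by rw [ha]; exact AddSubgroup.subset_closure rfl
    have ha0 : a ≠ 0 := by
      rintro rfl
      have : s = 0 := by
        have := hsS
        rw [ha, AddSubgroup.mem_closure_singleton] at this
        obtain ⟨n, hn⟩ := this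
        simpa using hn.symm
      exact hs0 this
    set b : ℝ := |a| with hb_def
    have hb0 : 0 < b := abs_pos.2 ha0
    have hbne : b ≠ 0 := hb0.ne'
    have hbS : b ∈ S := by
      rcases abs_choice a with hc | hc
      · rw [hb_def, hc]; exact haS
      · rw [hb_def, hc]; exact S.neg_mem haS
    have hSb : ∀ w : ℝ, w ∈ S → ∃ n : ℤ, w = n * b := by
      intro w hw
      rw [ha, AddSubgroup.mem_closure_singleton] at hw
      obtain ⟨n, hn⟩ := hw
      rcases abs_choice a with hc | hc
      · exact ⟨n, by rw [hb_def, hc, ← hn, zsmul_eq_mul]⟩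
      · exact ⟨-n, by rw [hb_def, hc, ← hn, zsmul_eq_mul]; push_cast; ring⟩
    obtain ⟨n, hn⟩ := hSb s hsS
    have hn0 : n ≠ 0 := by rintro rfl; simp at hn; exact hs0 hn
    -- key minimality lemma
    have key : ∀ w : ℝ, (M ∩ T w '' M).Nonempty → T w '' M = M := by
      intro w hne
      have hIm : ∀ v : ℝ, IsClosed (T v '' M) := fun v =>
        (hMcpt.image (flow_cont hT v)).isClosed
      have hgcomm : ∀ v : ℝ, T s '' (T v '' M) = T v '' M := by
        intro v
        rw [flow_image_image hT, add_comm, ← flow_image_image hT, hMi]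
      have hKi : T s '' (M ∩ T w '' M) = M ∩ T w '' M := by
        rw [image_inter (flow_bij hT s).injective, hMi, hgcomm]
      have h1 : M ∩ T w '' M = M :=
        hMmin _ inter_subset_left hne (hMc.inter (hIm w)) hKi
      have h2 : M ⊆ T w '' M := by
        conv_lhs => rw [← h1]
        exact inter_subset_right
      have h3 : T (-w) '' M ⊆ M := by
        calc T (-w) '' M ⊆ T (-w) '' (T w '' M) := image_mono h2
          _ = T 0 '' M := by rw [flow_image_image hT, neg_add_cancel]
          _ = M := flow_image_zero hT M
      have h4 : T (-w) '' M = M :=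
        hMmin _ h3 (hMne.image _) (hIm (-w)) (hgcomm (-w))
      calc T w '' M = T w '' (T (-w) '' M) := by rw [h4]
        _ = T 0 '' M := by rw [flow_image_image hT, add_neg_cancel]
        _ = M := flow_image_zero hT M
    -- surjectivity of (u, m) ↦ T u m on [0, b] × M
    have hkb : ∀ k : ℤ, ((k : ℝ) * b) ∈ S := by
      intro k
      have := AddSubgroup.zsmul_mem S hbS k
      rwa [zsmul_eq_mul] at this
    have hmem0 : ∀ (w : ℝ) (m : Y), m ∈ M →
        ∃ u ∈ Icc (0:ℝ) b, ∃ m' ∈ M, T u m' = T w m := by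
      intro w m hm
      refine ⟨b * Int.fract (w / b), ?_, T ((⌊w / b⌋ : ℝ) * b) m, ?_, ?_⟩
      · constructor
        · exact mul_nonneg hb0.le (Int.fract_nonneg _)
        · have := (Int.fract_lt_one (w / b)).le
          calc b * Int.fract (w / b) ≤ b * 1 := by
                exact mul_le_mul_of_nonneg_left this hb0.le
            _ = b := mul_one b
      · have := hkb ⌊w / b⌋
        rw [hSmem] at this
        rw [← this]
        exact mem_image_of_mem _ hm
      · rw [← hT.2.2]
        congr 1
        rw [Int.fract]
        field_simp
        ring
    have hsurj : ∀ y : Y, ∃ u ∈ Icc (0:ℝ) b, ∃ m ∈ M, T u m = y := by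
      set N : Set Y := (fun p : ℝ × Y => T p.1 p.2) '' (Icc (0:ℝ) b ×ˢ M) with hN_def
      have hNmem : ∀ y : Y, y ∈ N ↔ ∃ u ∈ Icc (0:ℝ) b, ∃ m ∈ M, T u m = y := by
        intro y
        constructor
        · rintro ⟨⟨u, m⟩, hp, rfl⟩
          exact ⟨u, (mem_prod.1 hp).1, m, (mem_prod.1 hp).2, rfl⟩
        · rintro ⟨u, hu, m, hm, rfl⟩
          exact ⟨(u, m), mem_prod.2 ⟨hu, hm⟩, rfl⟩
      have hNmem' : ∀ (w : ℝ) (m : Y), m ∈ M → T w m ∈ N := by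
        intro w m hm
        obtain ⟨u, hu, m', hm', he⟩ := hmem0 w m hm
        exact (hNmem _).2 ⟨u, hu, m', hm', he⟩
      have hNc : IsClosed N :=
        ((isCompact_Icc.prod hMcpt).image (flow_cont2 hT)).isClosed
      have hNinv : FlowInvariant T N := by
        intro v
        apply Subset.antisymm
        · rintro y ⟨z, hz, rfl⟩
          obtain ⟨u, hu, m, hm, rfl⟩ := (hNmem z).1 hz
          rw [← hT.2.2]
          exact hNmem' _ _ hm
        · intro y hy
          obtain ⟨u, hu, m, hm, rfl⟩ := (hNmem y).1 hy
          refine ⟨T (-v + u) m, hNmem' _ _ hm, ?_⟩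
          rw [← hT.2.2, ← add_assoc, add_neg_cancel, zero_add]
      have hNne : N.Nonempty := by
        obtain ⟨m, hm⟩ := hMne
        exact ⟨T 0 m, hNmem' 0 m hm⟩
      rcases hmin N hNc hNinv with he | hu
      · exact absurd he hNne.ne_empty
      · intro y
        exact (hNmem y).1 (hu ▸ mem_univ y)
    choose u₀ hu₀ m₀ hm₀ hTu₀ using hsurj
    -- the eigenvalue and eigenvector
    set l : ℝ := 1 / b with hl_def
    have hl0 : l ≠ 0 := one_div_ne_zero hbne
    set χ : Y → ℂ := fun y => Complex.exp (2 * Real.pi * Complex.I * l * (u₀ y)) with hχ_def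
    have hexp : ∀ (u w : ℝ), w ∈ S →
        Complex.exp (2 * Real.pi * Complex.I * l * ((u + w : ℝ) : ℂ)) =
          Complex.exp (2 * Real.pi * Complex.I * l * (u : ℂ)) := by
      intro u w hw
      obtain ⟨k, hk⟩ := hSb w hw
      have hlb : (l : ℂ) * (b : ℂ) = 1 := by
        have : l * b = 1 := by rw [hl_def]; field_simp
        exact_mod_cast this
      have harg : (2 * (Real.pi : ℂ) * Complex.I * (l : ℂ) * ((u + w : ℝ) : ℂ)) =
          2 * Real.pi * Complex.I * (l : ℂ) * (u : ℂ) + (k : ℂ) * (2 * Real.pi * Complex.I) := by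
        rw [hk]; push_cast
        linear_combination (2 * (Real.pi : ℂ) * Complex.I * (k : ℂ)) * hlb
      rw [harg, Complex.exp_add, Complex.exp_int_mul_two_pi_mul_I, mul_one]
    have hχapp : ∀ y : Y, χ y = Complex.exp (2 * Real.pi * Complex.I * l * (u₀ y)) :=
      fun y => rfl
    have core : ∀ (u : ℝ) (m : Y), m ∈ M →
        χ (T u m) = Complex.exp (2 * Real.pi * Complex.I * l * (u : ℂ)) := by
      intro u m hm
      set y := T u m with hy_def
      have hmm : T (u₀ y - u) (m₀ y) = m := by
        have h1 : T (u₀ y - u) (m₀ y) = T (-u) (T (u₀ y) (m₀ y)) := by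
          rw [← hT.2.2]; congr 1; ring
        rw [h1, hTu₀, hy_def, flow_inv hT]
      have hw : (u₀ y - u) ∈ S := by
        rw [hSmem]
        exact key _ ⟨m, hm, m₀ y, hm₀ y, hmm⟩
      have hstep : χ y = Complex.exp (2 * Real.pi * Complex.I * l * ((u + (u₀ y - u) : ℝ) : ℂ)) := by
        rw [hχapp]
        congr 1
        push_cast
        ring
      rw [hstep, hexp u _ hw]
    have heigen : ∀ (y : Y) (v : ℝ),
        χ (T v y) = Complex.exp (2 * Real.pi * Complex.I * l * v) * χ y := by
      intro y v
      have h1 : T v y = T (v + u₀ y) (m₀ y) := by rw [hT.2.2, hTu₀]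
      rw [h1, core _ _ (hm₀ y), hχapp, ← Complex.exp_add]
      congr 1
      push_cast
      ring
    have habs : ∀ y, ‖χ y‖ = 1 := by
      intro y
      have harg : (2 * (Real.pi : ℂ) * Complex.I * (l : ℂ) * ((u₀ y : ℝ) : ℂ)) =
          ((2 * Real.pi * l * u₀ y : ℝ) : ℂ) * Complex.I := by push_cast; ring
      rw [hχapp, harg, Complex.norm_exp_ofReal_mul_I]
    have hKcpt : IsCompact (Icc (0:ℝ) b ×ˢ M) := isCompact_Icc.prod hMcpt
    haveI hKcs : CompactSpace (Icc (0:ℝ) b ×ˢ M : Set (ℝ × Y)) :=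
      isCompact_iff_compactSpace.mp hKcpt
    set φ : (Icc (0:ℝ) b ×ˢ M : Set (ℝ × Y)) → Y := fun q => T q.1.1 q.1.2 with hφ_def
    have hφc : Continuous φ := (flow_cont2 hT).comp continuous_subtype_val
    have hφs : Function.Surjective φ := by
      intro y
      exact ⟨⟨(u₀ y, m₀ y), mem_prod.2 ⟨hu₀ y, hm₀ y⟩⟩, hTu₀ y⟩
    have hq : Topology.IsQuotientMap φ := hφc.isClosedMap.isQuotientMap hφc hφs
    have hχc : Continuous χ := by
      rw [hq.continuous_iff]
      have hcomp : χ ∘ φ = fun q : (Icc (0:ℝ) b ×ˢ M : Set (ℝ × Y)) =>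
          Complex.exp (2 * Real.pi * Complex.I * l * (((q : ℝ × Y).1 : ℝ) : ℂ)) := by
        funext q
        exact core q.1.1 q.1.2 (mem_prod.1 q.2).2
      rw [hcomp]
      apply Complex.continuous_exp.comp
      exact continuous_const.mul
        (Complex.continuous_ofReal.comp (continuous_fst.comp continuous_subtype_val))
    refine ⟨(n : ℚ)⁻¹, l, inv_ne_zero (Int.cast_ne_zero.2 hn0), ⟨χ, hχc, habs, heigen⟩, hl0, ?_⟩
    have ht' : t = 1 / s := by rw [hs_def, one_div_one_div]
    rw [ht', hn, hl_def]
    push_cast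
    rw [one_div, one_div, mul_inv]
end

section
/- Let (X₁,S₁) be an almost one-to-one extension of (X₂,S₂), and let (Y₁,T₁) and (Y₂,T₂) be the standard suspensions of S₁ and S₂ respectively. Then for each real number t, the time-t map T₁^t on (Y₁,T₁) is minimal if and only if the time-t map T₂^t on (Y₂,T₂) is minimal. -/
open Set

/-- The identification `(x, s) ∼ (Sⁿ x, s - n)` defining the standard suspension of `(X, S)`. -/
def SuspRel {X : Type*} (S : Equiv.Perm X) (p q : X × ℝ) : Prop :=
  ∃ n : ℤ, q.1 = (S ^ n) p.1 ∧ q.2 = p.2 - n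

/-- The standard suspension space of `(X, S)`, with the quotient topology. -/
abbrev Susp {X : Type*} (S : Equiv.Perm X) : Type _ := Quot (SuspRel S)

/-- The suspension flow: the time-`t` map `T^t [x, s] = [x, s + t]` on the standard
suspension of `(X, S)`. -/
def suspT {X : Type*} (S : Equiv.Perm X) (t : ℝ) : Susp S → Susp S :=
  Quot.map (fun p => (p.1, p.2 + t)) (by
    rintro ⟨x, s⟩ ⟨y, u⟩ ⟨n, h1, h2⟩
    exact ⟨n, h1, by dsimp at h2 ⊢; linarith⟩)


open Function

set_option linter.unusedSectionVars false


section SuspAux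

variable {X : Type*} [TopologicalSpace X] (S : Equiv.Perm X)

theorem suspRel_equivalence : Equivalence (SuspRel S) := by
  constructor
  · intro p; exact ⟨0, by simp, by simp⟩
  · rintro ⟨x, s⟩ ⟨y, u⟩ ⟨n, h1, h2⟩
    refine ⟨-n, ?_, ?_⟩
    · dsimp at h1 ⊢; rw [h1]; simp [zpow_neg]
    · dsimp at h2 ⊢; push_cast; linarith
  · rintro ⟨x, s⟩ ⟨y, u⟩ ⟨z, v⟩ ⟨n, h1, h2⟩ ⟨m, h3, h4⟩
    refine ⟨n + m, ?_, ?_⟩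
    · dsimp at h1 h3 ⊢
      rw [h3, h1, ← Equiv.Perm.mul_apply, ← zpow_add, add_comm]
    · dsimp at h2 h4 ⊢; push_cast; linarith

theorem suspRel_mk_eq {p q : X × ℝ} :
    Quot.mk (SuspRel S) p = Quot.mk (SuspRel S) q ↔ SuspRel S p q := by
  rw [Quot.eq]
  exact (suspRel_equivalence S).eqvGen_iff

theorem continuous_suspT (t : ℝ) : Continuous (suspT S t) := by
  rw [isQuotientMap_quot_mk.continuous_iff]
  exact continuous_quot_mk.comp (continuous_fst.prodMk (continuous_snd.add continuous_const))

theorem suspT_leftInverse (t : ℝ) : LeftInverse (suspT S (-t)) (suspT S t) := by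
  intro y
  obtain ⟨⟨x, s⟩, rfl⟩ := Quot.exists_rep y
  show Quot.mk _ (x, s + t + -t) = Quot.mk _ (x, s)
  rw [show s + t + -t = s by ring]

theorem compactSpace_susp [CompactSpace X] : CompactSpace (Susp S) := by
  constructor
  have key : (univ : Set (Susp S)) = Quot.mk (SuspRel S) '' (univ ×ˢ Icc (0 : ℝ) 1) := by
    ext y
    simp only [mem_univ, true_iff]
    obtain ⟨⟨x, s⟩, rfl⟩ := Quot.exists_rep y
    refine ⟨((S ^ (⌊s⌋ : ℤ)) x, s - ⌊s⌋), ⟨mem_univ _, ?_, ?_⟩, ?_⟩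
    · simp only; linarith [Int.floor_le s]
    · simp only; linarith [Int.lt_floor_add_one s]
    · exact (Quot.sound ⟨⌊s⌋, rfl, rfl⟩).symm
  rw [key]
  exact (isCompact_univ.prod isCompact_Icc).image continuous_quot_mk

variable (hS : Continuous S) (hS' : Continuous S.symm)
include hS hS'

theorem continuous_perm_zpow (n : ℤ) : Continuous ((S ^ n : Equiv.Perm X) : X → X) := by
  induction n using Int.induction_on with
  | zero => simpa using continuous_id
  | succ k ih =>
      have h : ((S ^ ((k : ℤ) + 1) : Equiv.Perm X) : X → X)
          = ((S ^ (k : ℤ) : Equiv.Perm X) : X → X) ∘ S := by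
        funext x; rw [zpow_add_one]; rfl
      rw [h]; exact ih.comp hS
  | pred k ih =>
      have h : ((S ^ (-(k : ℤ) - 1) : Equiv.Perm X) : X → X)
          = ((S ^ (-(k : ℤ)) : Equiv.Perm X) : X → X) ∘ S.symm := by
        funext x; rw [zpow_sub_one]; rfl
      rw [h]; exact ih.comp hS'

theorem isOpenMap_suspMk : IsOpenMap (Quot.mk (SuspRel S)) := by
  intro U hU
  rw [← isQuotientMap_quot_mk.isOpen_preimage]
  have key : Quot.mk (SuspRel S) ⁻¹' (Quot.mk (SuspRel S) '' U)
      = ⋃ n : ℤ, (fun p : X × ℝ => ((S ^ n) p.1, p.2 - n)) ⁻¹' U := by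
    ext ⟨x, s⟩
    simp only [mem_preimage, mem_image, mem_iUnion]
    constructor
    · rintro ⟨p, hp, hmk⟩
      obtain ⟨n, h1, h2⟩ := (suspRel_equivalence S).symm ((suspRel_mk_eq S).mp hmk)
      refine ⟨n, ?_⟩
      have : ((S ^ n) x, s - (n : ℝ)) = p := by
        rw [← h1, ← h2]
      rw [this]; exact hp
    · rintro ⟨n, hn⟩
      exact ⟨((S ^ n) x, s - n), hn, (Quot.sound ⟨n, rfl, rfl⟩).symm⟩
  rw [key]
  exact isOpen_iUnion fun n => hU.preimage
    (((continuous_perm_zpow S hS hS' n).comp continuous_fst).prodMk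
      (continuous_snd.sub continuous_const))

theorem isClosed_suspRel [T2Space X] :
    IsClosed {p : (X × ℝ) × (X × ℝ) | SuspRel S p.1 p.2} := by
  have hrw : {p : (X × ℝ) × (X × ℝ) | SuspRel S p.1 p.2}
      = ⋃ n : ℤ, {p : (X × ℝ) × (X × ℝ) | p.2.1 = (S ^ n) p.1.1 ∧ p.2.2 = p.1.2 - n} := by
    ext p; simp only [mem_setOf_eq, mem_iUnion]; rfl
  rw [hrw]
  have hloc : LocallyFinite
      (fun n : ℤ => {p : (X × ℝ) × (X × ℝ) | p.2.1 = (S ^ n) p.1.1 ∧ p.2.2 = p.1.2 - n}) := by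
    intro p
    refine ⟨{q : (X × ℝ) × (X × ℝ) | |q.1.2 - q.2.2 - (p.1.2 - p.2.2)| < 1 / 2}, ?_, ?_⟩
    · refine IsOpen.mem_nhds ?_ ?_
      · have : Continuous fun q : (X × ℝ) × (X × ℝ) =>
            |q.1.2 - q.2.2 - (p.1.2 - p.2.2)| :=
          (((continuous_snd.comp continuous_fst).sub
            (continuous_snd.comp continuous_snd)).sub continuous_const).abs
        exact isOpen_lt this continuous_const
      · simp
    · apply Set.Finite.subset (Set.finite_Icc (⌈p.1.2 - p.2.2 - 1/2⌉) (⌊p.1.2 - p.2.2 + 1/2⌋))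
      rintro n ⟨q, ⟨⟨h1, h2⟩, h3⟩⟩
      simp only [mem_setOf_eq] at h2 h3
      have hn : |(n : ℝ) - (p.1.2 - p.2.2)| < 1 / 2 := by
        have : q.1.2 - q.2.2 = n := by rw [h2]; ring
        rwa [← this]
      rw [abs_lt] at hn
      constructor
      · rw [Int.ceil_le]; push_cast; linarith
      · rw [Int.le_floor]; push_cast; linarith
  exact hloc.isClosed_iUnion fun n =>
    ((isClosed_eq (continuous_fst.comp continuous_snd)
        ((continuous_perm_zpow S hS hS' n).comp (continuous_fst.comp continuous_fst))).inter
      (isClosed_eq (continuous_snd.comp continuous_snd)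
        ((continuous_snd.comp continuous_fst).sub continuous_const)))

theorem t2Space_susp [T2Space X] : T2Space (Susp S) := by
  rw [t2_iff_isClosed_diagonal, ← isOpen_compl_iff]
  have key : (diagonal (Susp S))ᶜ
      = Prod.map (Quot.mk (SuspRel S)) (Quot.mk (SuspRel S)) ''
          {p : (X × ℝ) × (X × ℝ) | SuspRel S p.1 p.2}ᶜ := by
    ext ⟨a, b⟩
    constructor
    · intro hab
      obtain ⟨pa, rfl⟩ := Quot.exists_rep a
      obtain ⟨pb, rfl⟩ := Quot.exists_rep b
      exact ⟨(pa, pb), fun hrel => hab (Quot.sound hrel), rfl⟩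
    · rintro ⟨⟨pa, pb⟩, hrel, heq⟩
      intro hd
      apply hrel
      have h1 : Quot.mk (SuspRel S) pa = a := congrArg Prod.fst heq
      have h2 : Quot.mk (SuspRel S) pb = b := congrArg Prod.snd heq
      exact (suspRel_mk_eq S).mp (by rw [h1, h2]; exact hd)
  rw [key]
  exact ((isOpenMap_suspMk S hS hS').prodMap (isOpenMap_suspMk S hS hS')) _
    (isClosed_suspRel S hS hS').isOpen_compl

end SuspAux

section SuspMapAux

variable {X₁ X₂ : Type*} [TopologicalSpace X₁] [TopologicalSpace X₂]
  (S₁ : Equiv.Perm X₁) (S₂ : Equiv.Perm X₂)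
  (F : X₁ → X₂) (hFcomm : ∀ x, F (S₁ x) = S₂ (F x))
include hFcomm

theorem comm_zpow (n : ℤ) : ∀ x : X₁, F ((S₁ ^ n) x) = (S₂ ^ n) (F x) := by
  have hinv : ∀ x, F (S₁⁻¹ x) = S₂⁻¹ (F x) := by
    intro x
    apply S₂.injective
    show S₂ (F (S₁⁻¹ x)) = S₂ (S₂⁻¹ (F x))
    rw [← hFcomm]; simp
  induction n using Int.induction_on with
  | zero => simp
  | succ k ih =>
      intro x
      rw [zpow_add_one, zpow_add_one, Equiv.Perm.mul_apply, Equiv.Perm.mul_apply,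
        ih, hFcomm]
  | pred k ih =>
      intro x
      rw [zpow_sub_one, zpow_sub_one, Equiv.Perm.mul_apply, Equiv.Perm.mul_apply,
        ih, hinv]

def suspFactor : Susp S₁ → Susp S₂ :=
  Quot.map (fun p => (F p.1, p.2)) (by
    rintro ⟨x, s⟩ ⟨y, u⟩ ⟨n, h1, h2⟩
    exact ⟨n, by dsimp at h1 ⊢; rw [h1, comm_zpow S₁ S₂ F hFcomm n], h2⟩)

theorem continuous_suspFactor (hFc : Continuous F) :
    Continuous (suspFactor S₁ S₂ F hFcomm) := by
  rw [isQuotientMap_quot_mk.continuous_iff]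
  exact continuous_quot_mk.comp ((hFc.comp continuous_fst).prodMk continuous_snd)

theorem surjective_suspFactor (hFs : Surjective F) :
    Surjective (suspFactor S₁ S₂ F hFcomm) := by
  intro y
  obtain ⟨⟨x₂, s⟩, rfl⟩ := Quot.exists_rep y
  obtain ⟨x₁, rfl⟩ := hFs x₂
  exact ⟨Quot.mk _ (x₁, s), rfl⟩

theorem suspFactor_comm (t : ℝ) (y : Susp S₁) :
    suspFactor S₁ S₂ F hFcomm (suspT S₁ t y) = suspT S₂ t (suspFactor S₁ S₂ F hFcomm y) := by
  obtain ⟨⟨x, s⟩, rfl⟩ := Quot.exists_rep y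
  rfl

end SuspMapAux

theorem dense_image_of_surjective {α β : Type*} [TopologicalSpace α] [TopologicalSpace β]
    {f : α → β} (hf : Continuous f) (hs : Surjective f) {s : Set α} (h : Dense s) :
    Dense (f '' s) := by
  rw [dense_iff_closure_eq] at h ⊢
  apply eq_univ_of_univ_subset
  calc (univ : Set β) = f '' closure s := by rw [h, image_univ, hs.range_eq]
    _ ⊆ closure (f '' s) := image_closure_subset_closure_image hf

/-- If `(X₁, S₁)` is an almost one-to-one extension of `(X₂, S₂)`, then for each
`t ∈ ℝ` the time-`t` map on the standard suspension of `S₁` is minimal iff the time-`t` map on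
the standard suspension of `S₂` is minimal. -/
theorem time_map_minimal_iff_of_almost_one_to_one {X₁ X₂ : Type*}
    [MetricSpace X₁] [CompactSpace X₁] [MetricSpace X₂] [CompactSpace X₂]
    (S₁ : Equiv.Perm X₁) (hS₁ : Continuous S₁) (hS₁' : Continuous S₁.symm)
    (S₂ : Equiv.Perm X₂) (hS₂ : Continuous S₂) (hS₂' : Continuous S₂.symm)
    (F : X₁ → X₂) (hFc : Continuous F) (hFs : Function.Surjective F)
    (hFcomm : ∀ x, F (S₁ x) = S₂ (F x))
    (hF11 : Dense {x : X₁ | F ⁻¹' {F x} = {x}}) (t : ℝ) :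
    IsMinimalMap (suspT S₁ t) ↔ IsMinimalMap (suspT S₂ t) := by
  set Fh := suspFactor S₁ S₂ F hFcomm with hFh
  have hFhc : Continuous Fh := continuous_suspFactor S₁ S₂ F hFcomm hFc
  have hFhs : Surjective Fh := surjective_suspFactor S₁ S₂ F hFcomm hFs
  have hcomm : ∀ y, Fh (suspT S₁ t y) = suspT S₂ t (Fh y) := suspFactor_comm S₁ S₂ F hFcomm t
  have hRI : ∀ y, suspT S₁ t (suspT S₁ (-t) y) = y := by
    intro y
    have := suspT_leftInverse S₁ (-t) y
    rwa [neg_neg] at this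
  constructor
  · -- minimality passes to the factor
    intro h₁ M hMc hMi
    have hPc : IsClosed (Fh ⁻¹' M) := hMc.preimage hFhc
    have hPi : suspT S₁ t '' (Fh ⁻¹' M) = Fh ⁻¹' M := by
      apply Subset.antisymm
      · rintro _ ⟨y, hy, rfl⟩
        show Fh (suspT S₁ t y) ∈ M
        rw [hcomm, ← hMi]
        exact mem_image_of_mem _ hy
      · intro y hy
        obtain ⟨m, hm, hme⟩ : Fh y ∈ suspT S₂ t '' M := by rw [hMi]; exact hy
        refine ⟨suspT S₁ (-t) y, ?_, hRI y⟩
        show Fh (suspT S₁ (-t) y) ∈ M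
        have hinj : Function.Injective (suspT S₂ t) := (suspT_leftInverse S₂ t).injective
        have hkey : suspT S₂ t (Fh (suspT S₁ (-t) y)) = suspT S₂ t m := by
          rw [← hcomm, hRI y, ← hme]
        rw [hinj hkey]
        exact hm
    rcases h₁ _ hPc hPi with h | h
    · left; rw [← image_preimage_eq M hFhs, h, image_empty]
    · right; rw [← image_preimage_eq M hFhs, h, image_univ, hFhs.range_eq]
  · -- minimality lifts through an almost one-to-one extension
    intro h₂ M hMc hMi
    haveI : CompactSpace (Susp S₁) := compactSpace_susp S₁
    haveI : T2Space (Susp S₂) := t2Space_susp S₂ hS₂ hS₂'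
    by_cases hME : M = ∅
    · left; exact hME
    right
    have hNc : IsClosed (Fh '' M) := (hMc.isCompact.image hFhc).isClosed
    have hNi : suspT S₂ t '' (Fh '' M) = Fh '' M := by
      calc suspT S₂ t '' (Fh '' M) = (fun y => suspT S₂ t (Fh y)) '' M := by rw [image_image]
        _ = (fun y => Fh (suspT S₁ t y)) '' M := by simp_rw [hcomm]
        _ = Fh '' (suspT S₁ t '' M) := by rw [image_image]
        _ = Fh '' M := by rw [hMi]
    rcases h₂ _ hNc hNi with h | h
    · exact absurd (image_eq_empty.mp h) hME
    have hdsub : Quot.mk (SuspRel S₁) '' ({x : X₁ | F ⁻¹' {F x} = {x}} ×ˢ (univ : Set ℝ)) ⊆ M := by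
      rintro _ ⟨⟨x, s⟩, ⟨hx, -⟩, rfl⟩
      have hmem : Fh (Quot.mk (SuspRel S₁) (x, s)) ∈ Fh '' M := by rw [h]; trivial
      obtain ⟨m, hm, hme⟩ := hmem
      obtain ⟨⟨x', s'⟩, rfl⟩ := Quot.exists_rep m
      have hme' : Quot.mk (SuspRel S₂) (F x', s') = Quot.mk (SuspRel S₂) (F x, s) := hme
      obtain ⟨n, h1, h2⟩ := (suspRel_mk_eq S₂).mp hme'
      dsimp at h1 h2
      have hx' : (S₁ ^ n) x' = x := by
        have hmem2 : (S₁ ^ n) x' ∈ F ⁻¹' {F x} := by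
          simp only [mem_preimage, mem_singleton_iff]
          rw [comm_zpow S₁ S₂ F hFcomm n x', ← h1]
        rw [hx] at hmem2
        exact hmem2
      have heq : Quot.mk (SuspRel S₁) (x', s') = Quot.mk (SuspRel S₁) (x, s) :=
        (suspRel_mk_eq S₁).mpr ⟨n, hx'.symm, h2⟩
      rw [← heq]
      exact hm
    have hdense : Dense (Quot.mk (SuspRel S₁) '' ({x : X₁ | F ⁻¹' {F x} = {x}} ×ˢ (univ : Set ℝ))) :=
      dense_image_of_surjective continuous_quot_mk (fun y => Quot.exists_rep y)
        (hF11.prod dense_univ)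
    rw [← hMc.closure_eq]
    exact (hdense.mono hdsub).closure_eq
end
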